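/- Let N be a 3-prime zero-symmetric left near-ring and d a nonzero multiplicative derivation of N such that [d(x), y] = [d(x), d(y)] for all x, y ∈ N, where [a,b] = ab − ba. Then N is a commutative ring (multiplication commutative and addition abelian). -/
import Mathlib


class LeftNearRing (N : Type*) extends AddGroup N, Mul N where
  mul_assoc : ∀ a b c : N, a * b * c = a * (b * c)
  left_distrib : ∀ a b c : N, a * (b + c) = a * b + a * c

theorem stmt9 {N : Type*} [LeftNearRing N]
    (hzs : ∀ x : N, 0 * x = 0)
    (hp : ∀ a b : N, (∀ n : N, a * n * b = 0) → a = 0 ∨ b = 0)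
    (d : N → N) (hd : ∀ x y : N, d (x * y) = x * d y + d x * y)
    (hd0 : ∃ x : N, d x ≠ 0)
    (hc : ∀ x y : N, d x * y - y * d x = d x * d y - d y * d x) :
    (∀ x y : N, x * y = y * x) ∧ (∀ x y : N, x + y = y + x) := by
  have ma : ∀ a b c : N, a * b * c = a * (b * c) := LeftNearRing.mul_assoc
  have ld : ∀ a b c : N, a * (b + c) = a * b + a * c := LeftNearRing.left_distrib
  have mz : ∀ x : N, x * 0 = 0 := by
    intro x
    have h := ld x 0 0
    rw [add_zero] at h
    exact left_eq_add.mp h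
  have mneg : ∀ x y : N, x * (-y) = -(x * y) := by
    intro x y
    have h : x * (-y) + x * y = 0 := by rw [← ld, neg_add_cancel, mz]
    exact eq_neg_of_add_eq_zero_left h
  have msub : ∀ x y z : N, x * (y - z) = x * y - x * z := by
    intro x y z
    rw [sub_eq_add_neg, ld, mneg, ← sub_eq_add_neg]
  -- partial distributivity
  have L1 : ∀ x y z : N, (x * d y + d x * y) * z = x * d y * z + d x * y * z := by
    intro x y z
    have h1 := hd (x * y) z
    rw [hd x y] at h1
    have h2 := hd x (y * z)
    rw [hd y z, ld x (y * d z) (d y * z)] at h2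
    rw [ma x y z] at h1
    rw [h2] at h1
    rw [← ma x y (d z)] at h1
    rw [add_assoc] at h1
    have h3 := add_left_cancel h1
    rw [← h3, ma x (d y) z, ma (d x) y z]
  -- step (12)
  have S12 : ∀ x y : N, d x * (d (d x) * y) = d (d x) * y * d x := by
    intro x y
    have h10 := hc x (d x * y)
    rw [hd (d x) y] at h10
    rw [ld (d x) (d x * d y) (d (d x) * y), L1 (d x) y (d x)] at h10
    rw [ma (d x) (d y) (d x)] at h10
    rw [ma (d x) y (d x)] at h10
    have h11 : d x * (d x * y) - d x * (y * d x)
        = d x * (d x * d y) - d x * (d y * d x) := by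
      rw [← msub (d x) (d x * y) (y * d x), ← msub (d x) (d x * d y) (d y * d x), hc x y]
    rw [h11] at h10
    -- h10 : A - C = A + B - (C + D)
    have h' := sub_eq_iff_eq_add.mp h10.symm
    rw [sub_eq_add_neg, add_assoc, neg_add_cancel_left] at h'
    exact add_left_cancel h'
  have Sey : ∀ x y n : N, d (d x) * y * (n * d x - d x * n) = 0 := by
    intro x y n
    have h1 := S12 x (y * n)
    rw [← ma (d (d x)) y n] at h1
    have h2 : d x * (d (d x) * y) * n = d (d x) * y * d x * n := by rw [S12 x y]
    rw [ma (d x) (d (d x) * y) n] at h2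
    rw [h1] at h2
    rw [msub (d (d x) * y) (n * d x) (d x * n)]
    rw [← ma (d (d x) * y) n (d x), ← ma (d (d x) * y) (d x) n]
    rw [h2, sub_self]
  have C14 : ∀ x : N, d (d x) = 0 ∨ ∀ n : N, d x * n = n * d x := by
    intro x
    by_cases h : d (d x) = 0
    · exact Or.inl h
    · right
      intro n
      rcases hp (d (d x)) (n * d x - d x * n) (fun y => Sey x y n) with h' | h'
      · exact absurd h' h
      · exact (sub_eq_zero.mp h').symm
  -- d(N) is central
  have Zd : ∀ x y : N, d x * y = y * d x := by
    intro x y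
    have h := hc x y
    have hr : d x * d y - d y * d x = 0 := by
      rcases C14 y with h0 | hz
      · have h2 := hc x (d y)
        rw [h0, mz (d x), hzs (d x), sub_self] at h2
        exact h2
      · rw [hz (d x), sub_self]
    rw [hr] at h
    exact sub_eq_zero.mp h
  -- relation (20)
  have K : ∀ x y : N, d y * (x * y) = d y * (y * x) := by
    intro x y
    have h := Zd (x * y) y
    rw [hd x y] at h
    rw [L1 x y y, ld y (x * d y) (d x * y)] at h
    have e1 : d x * y * y = y * (d x * y) := by
      rw [ma (d x) y y, Zd x (y * y), Zd x y, ma y y (d x)]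
    rw [e1] at h
    have h' := add_right_cancel h
    calc d y * (x * y) = (x * y) * d y := Zd y (x * y)
      _ = x * (y * d y) := ma x y (d y)
      _ = x * (d y * y) := by rw [Zd y y]
      _ = x * d y * y := (ma x (d y) y).symm
      _ = y * (x * d y) := h'
      _ = y * (d y * x) := by rw [Zd y x]
      _ = y * d y * x := (ma y (d y) x).symm
      _ = d y * y * x := by rw [← Zd y y]
      _ = d y * (y * x) := ma (d y) y x
  -- finishing lemma
  have Kc : ∀ c y : N, (∀ X : N, c * (X * y) = c * (y * X)) → c ≠ 0 →
      ∀ x : N, x * y = y * x := by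
    intro c y hR hc0 x
    have key : ∀ n : N, c * n * (x * y - y * x) = 0 := by
      intro n
      have e1 : c * (n * (x * y)) = c * (y * (n * x)) := by
        rw [← ma n x y]
        exact hR (n * x)
      have e2 : c * (n * (y * x)) = c * (y * (n * x)) := by
        rw [← ma n y x]
        rw [← ma c (n * y) x]
        rw [hR n]
        rw [ma c (y * n) x, ma y n x]
      have h3 : c * (n * (x * y - y * x)) = 0 := by
        rw [msub n (x * y) (y * x), msub c (n * (x * y)) (n * (y * x)), e1, e2, sub_self]
      rw [ma c n (x * y - y * x)]
      exact h3
    rcases hp c (x * y - y * x) key with h | h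
    · exact absurd h hc0
    · exact sub_eq_zero.mp h
  -- commutativity of multiplication
  have mcomm : ∀ x y : N, x * y = y * x := by
    intro x y
    by_cases hy : d y = 0
    · obtain ⟨w, hw⟩ := hd0
      refine Kc (d w) y ?_ hw x
      intro X
      have hyw : d (y * w) = y * d w := by rw [hd y w, hy, hzs, add_zero]
      have h1 : y * d w * X = X * (y * d w) := by
        have h := Zd (y * w) X
        rw [hyw] at h
        exact h
      calc d w * (X * y) = (X * y) * d w := Zd w (X * y)
        _ = X * (y * d w) := ma X y (d w)
        _ = y * d w * X := h1.symm
        _ = y * (d w * X) := ma y (d w) X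
        _ = y * (X * d w) := by rw [Zd w X]
        _ = y * X * d w := (ma y X (d w)).symm
        _ = d w * (y * X) := (Zd w (y * X)).symm
    · exact Kc (d y) y (fun X => K X y) hy x
  -- right distributivity and additive consequences
  have rdist : ∀ a b c : N, (a + b) * c = a * c + b * c := by
    intro a b c
    rw [mcomm (a + b) c, ld, mcomm c a, mcomm c b]
  have negd : ∀ a c : N, (-a) * c = -(a * c) := by
    intro a c
    rw [mcomm (-a) c, mneg, mcomm c a]
  have subd : ∀ a b c : N, (a - b) * c = a * c - b * c := by
    intro a b c
    rw [sub_eq_add_neg, rdist, negd, ← sub_eq_add_neg]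
  have pcomm : ∀ a b u v : N, a * v + b * u = b * u + a * v := by
    intro a b u v
    have h1 : (a + b) * (u + v) = a * u + a * v + (b * u + b * v) := by
      rw [rdist a b (u + v), ld a u v, ld b u v]
    have h2 : (a + b) * (u + v) = a * u + b * u + (a * v + b * v) := by
      rw [ld (a + b) u v, rdist a b u, rdist a b v]
    have h := h1.symm.trans h2
    rw [add_assoc (a * u) (a * v), add_assoc (a * u) (b * u)] at h
    have h' := add_left_cancel h
    rw [← add_assoc (a * v) (b * u) (b * v), ← add_assoc (b * u) (a * v) (b * v)] at h'
    exact add_right_cancel h'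
  have wz : ∀ x y c : N, (x + y - x - y) * c = 0 := by
    intro x y c
    rw [subd (x + y - x) y c, subd (x + y) x c, rdist x y c]
    rw [pcomm x y c c]
    rw [add_sub_cancel_right, sub_self]
  have habel : ∀ x y : N, x + y = y + x := by
    intro x y
    have h0 : ∀ n : N, (x + y - x - y) * n * (x + y - x - y) = 0 := by
      intro n
      rw [ma]
      exact wz x y (n * (x + y - x - y))
    have hw : x + y - x - y = 0 := by
      rcases hp _ _ h0 with h | h
      · exact h
      · exact h
    have h1 : x + y - x = y := sub_eq_zero.mp hw
    have h2 := sub_eq_iff_eq_add.mp h1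
    exact h2
  exact ⟨mcomm, habel⟩
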